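/- Suppose all sampling rates are reciprocals of positive integers (e.g., powers of 1/2) and q takes integer values on all subsets. Then the new estimator value Σ_{j=1}^{m} (q(D(T;p'_{j−1},r)) − q(D(T;p'_j,r)))/p'_j is an integer. -/

import Mathlib

/-- If all sampling rates are reciprocals of positive integers and `q` takes integer values
(with `q ∅ = 0`), then the value of the new estimator is an integer. -/
theorem stmt_15 {α : Type*} [DecidableEq α] (T : Finset α) (hT : T.Nonempty)
    (r : α → ℝ) (hr : ∀ s ∈ T, r s ∈ Set.Ioc (0 : ℝ) 1)
    (hrecip : ∀ s ∈ T, ∃ k : ℕ, 0 < k ∧ r s = 1 / (k : ℝ))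
    (m : ℕ) (hm : 1 ≤ m) (p : ℕ → ℝ) (hp0 : p 0 = 0)
    (hmono : ∀ i < m, p i < p (i + 1))
    (himg : T.image r = (Finset.range m).image (fun j => p (j + 1)))
    (q : Finset α → ℤ) (hq0 : q (∅ : Finset α) = 0) :
    ∃ z : ℤ,
      (∑ j ∈ Finset.range m,
          ((q (T.filter (fun s => p j < r s)) : ℝ)
            - (q (T.filter (fun s => p (j + 1) < r s)) : ℝ)) / p (j + 1))
        = (z : ℝ) := by
  have hmem : (∑ j ∈ Finset.range m,
      ((q (T.filter (fun s => p j < r s)) : ℝ)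
        - (q (T.filter (fun s => p (j + 1) < r s)) : ℝ)) / p (j + 1))
      ∈ (Int.castRingHom ℝ).range := by
    refine Subring.sum_mem _ (fun j hj => ?_)
    -- p (j+1) is in the image of r
    have hpj : p (j + 1) ∈ (Finset.range m).image (fun j => p (j + 1)) :=
      Finset.mem_image_of_mem _ hj
    rw [← himg] at hpj
    obtain ⟨s, hs, hrs⟩ := Finset.mem_image.mp hpj
    obtain ⟨k, hk, hks⟩ := hrecip s hs
    have hk0 : (k : ℝ) ≠ 0 := Nat.cast_ne_zero.mpr hk.ne'
    have hpk : p (j + 1) = 1 / (k : ℝ) := by rw [← hrs, hks]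
    refine ⟨(k : ℤ) * (q (T.filter (fun s => p j < r s))
        - q (T.filter (fun s => p (j + 1) < r s))), ?_⟩
    show ((((k : ℤ) * _ : ℤ)) : ℝ) = _
    push_cast
    rw [hpk]
    field_simp
  obtain ⟨z, hz⟩ := hmem
  exact ⟨z, hz.symm⟩
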